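/- Fix u, k, ω, σ > 0 and β > 0. Then λ ∫₀^∞ exp(−λα − ½k²σ²(α + β + λ^{−1})) sin(ω(α+β)) sinh((k²σ²/(2λ)) e^{−λ(α+β)}) dα tends to 0 as λ → 0⁺. -/

import Mathlib

open MeasureTheory Real Set

/-- The paper's leading-order Stokes'-drift kernel `M(β)` for the elastic dumbbell,
with wave amplitude `u`, wavenumber `k`, frequency `ω`, noise strength `σ`,
and spring constant `l` (the paper's `λ`). -/
noncomputable def stokesKernel (u k ω σ l β : ℝ) : ℝ :=
  (1 / 2) * u ^ 2 * k *
    (Real.sin (ω * β) *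
        Real.exp (-(k ^ 2 * σ ^ 2 / 2) * (β + l⁻¹ * (1 - Real.exp (-(l * β))))) -
      l * ∫ α in Ioi (0 : ℝ),
        Real.exp (-(l * α) - k ^ 2 * σ ^ 2 / 2 * (α + β + l⁻¹)) * Real.sin (ω * (α + β)) *
          Real.sinh (k ^ 2 * σ ^ 2 / (2 * l) * Real.exp (-(l * (α + β)))))

/-- The second term of the Stokes'-drift kernel vanishes in the weak-spring limit
`λ → 0⁺`. -/
theorem kernel_second_term_tendsto_zero_weak_spring (u k ω σ β : ℝ)
    (hu : 0 < u) (hk : 0 < k) (hω : 0 < ω) (hσ : 0 < σ) (hβ : 0 < β) :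
    Filter.Tendsto
      (fun l : ℝ =>
        l * ∫ α in Ioi (0 : ℝ),
          Real.exp (-(l * α) - k ^ 2 * σ ^ 2 / 2 * (α + β + l⁻¹)) * Real.sin (ω * (α + β)) *
            Real.sinh (k ^ 2 * σ ^ 2 / (2 * l) * Real.exp (-(l * (α + β)))))
      (nhdsWithin 0 (Ioi 0)) (nhds 0) := by
  set c : ℝ := k ^ 2 * σ ^ 2 / 2 with hc
  have hcpos : 0 < c := by positivity
  -- the dominating function and its integral
  have hintg : IntegrableOn (fun α : ℝ => (1 / 2 : ℝ) * Real.exp (-c * α)) (Ioi 0) :=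
    (exp_neg_integrableOn_Ioi 0 hcpos).const_mul _
  set C : ℝ := ∫ α in Ioi (0 : ℝ), (1 / 2 : ℝ) * Real.exp (-c * α) with hC
  have hCnonneg : 0 ≤ C := by
    apply integral_nonneg
    intro x; positivity
  -- key bound
  have key : ∀ l : ℝ, l ∈ Ioi (0 : ℝ) →
      |l * ∫ α in Ioi (0 : ℝ),
          Real.exp (-(l * α) - c * (α + β + l⁻¹)) * Real.sin (ω * (α + β)) *
            Real.sinh (k ^ 2 * σ ^ 2 / (2 * l) * Real.exp (-(l * (α + β))))| ≤ l * C := by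
    intro l hl
    rw [mem_Ioi] at hl
    rw [abs_mul, abs_of_pos hl]
    refine mul_le_mul_of_nonneg_left ?_ hl.le
    have := MeasureTheory.norm_integral_le_of_norm_le (μ := volume.restrict (Ioi 0))
      (f := fun α : ℝ =>
        Real.exp (-(l * α) - c * (α + β + l⁻¹)) * Real.sin (ω * (α + β)) *
          Real.sinh (k ^ 2 * σ ^ 2 / (2 * l) * Real.exp (-(l * (α + β)))))
      (g := fun α : ℝ => (1 / 2 : ℝ) * Real.exp (-c * α)) hintg ?_
    · rw [hC]; simpa only [Real.norm_eq_abs] using this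
    · filter_upwards [ae_restrict_mem measurableSet_Ioi] with α hα
      rw [mem_Ioi] at hα
      have hx : 0 ≤ k ^ 2 * σ ^ 2 / (2 * l) * Real.exp (-(l * (α + β))) := by positivity
      have hsinh : Real.sinh (k ^ 2 * σ ^ 2 / (2 * l) * Real.exp (-(l * (α + β)))) ≤
          Real.exp (k ^ 2 * σ ^ 2 / (2 * l) * Real.exp (-(l * (α + β)))) / 2 := by
        rw [Real.sinh_eq]
        have : 0 < Real.exp (-(k ^ 2 * σ ^ 2 / (2 * l) * Real.exp (-(l * (α + β))))) :=
          Real.exp_pos _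
        linarith
      have hsinh0 : 0 ≤ Real.sinh (k ^ 2 * σ ^ 2 / (2 * l) * Real.exp (-(l * (α + β)))) :=
        Real.sinh_nonneg_iff.mpr hx
      have hsin : |Real.sin (ω * (α + β))| ≤ 1 := Real.abs_sin_le_one _
      rw [Real.norm_eq_abs, abs_mul, abs_mul, Real.abs_exp, abs_of_nonneg hsinh0]
      calc Real.exp (-(l * α) - c * (α + β + l⁻¹)) * |Real.sin (ω * (α + β))| *
              Real.sinh (k ^ 2 * σ ^ 2 / (2 * l) * Real.exp (-(l * (α + β))))
          ≤ Real.exp (-(l * α) - c * (α + β + l⁻¹)) * 1 *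
              (Real.exp (k ^ 2 * σ ^ 2 / (2 * l) * Real.exp (-(l * (α + β)))) / 2) := by
            apply mul_le_mul
            · exact mul_le_mul_of_nonneg_left hsin (Real.exp_pos _).le
            · exact hsinh
            · exact hsinh0
            · positivity
        _ = Real.exp ((-(l * α) - c * (α + β + l⁻¹)) +
              k ^ 2 * σ ^ 2 / (2 * l) * Real.exp (-(l * (α + β)))) / 2 := by
            rw [mul_one, mul_div_assoc', ← Real.exp_add]
        _ ≤ Real.exp (-c * α) / 2 := by
            gcongr
            have hE : Real.exp (-(l * (α + β))) ≤ 1 := by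
              apply Real.exp_le_one_iff.mpr
              nlinarith
            have h1 : k ^ 2 * σ ^ 2 / (2 * l) * Real.exp (-(l * (α + β))) ≤ c * l⁻¹ := by
              have : k ^ 2 * σ ^ 2 / (2 * l) = c * l⁻¹ := by
                field_simp [hc]
                linarith [hc]
              rw [this]
              nlinarith [mul_pos hcpos (inv_pos.mpr hl)]
            nlinarith [mul_pos hl hα, mul_pos hcpos hβ]
        _ = 1 / 2 * Real.exp (-c * α) := by ring
  -- squeeze
  rw [tendsto_zero_iff_abs_tendsto_zero]
  simp only [Function.comp_def]
  refine squeeze_zero' (g := fun l : ℝ => l * C) ?_ ?_ ?_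
  · filter_upwards with l using abs_nonneg _
  · filter_upwards [self_mem_nhdsWithin] with l hl using key l hl
  · have : Filter.Tendsto (fun l : ℝ => l * C) (nhds 0) (nhds 0) := by
      have h2 := ((continuous_id.mul (continuous_const (y := C))).tendsto (0 : ℝ))
      simp at h2
      exact h2
    exact this.mono_left nhdsWithin_le_nhds
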